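/- Let f : ℝ^d → ℝ be a proper, nonnegative C² function, and let α > 0, β > 0 and a ∈ ℝ be constants such that Δf − α|∇f|² + βf ≤ a and Δf ≤ a hold everywhere on ℝ^d. Then the integral ∫_{ℝ^d} e^{−αf} dx is finite. -/

import Mathlib

open MeasureTheory Real Gradient

/-- The Laplacian of a function on Euclidean space, as the trace of the second derivative. -/
noncomputable def lap {d : ℕ} (f : EuclideanSpace ℝ (Fin d) → ℝ)
    (x : EuclideanSpace ℝ (Fin d)) : ℝ :=
  ∑ i : Fin d,
    iteratedFDeriv ℝ 2 f x ![EuclideanSpace.single i 1, EuclideanSpace.single i 1]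


lemma glue_mono : Monotone expNegInvGlue := by
  intro x y h
  unfold expNegInvGlue
  by_cases hx : x ≤ 0
  · rw [if_pos hx]; split
    · rfl
    · positivity
  · push_neg at hx
    rw [if_neg (by linarith), if_neg (by linarith)]
    refine Real.exp_le_exp.2 (neg_le_neg ?_)
    exact inv_anti₀ hx h

lemma st_mono : Monotone Real.smoothTransition := by
  intro x y h
  unfold Real.smoothTransition
  rw [div_le_div_iff₀ (Real.smoothTransition.pos_denom x) (Real.smoothTransition.pos_denom y)]
  have h1 := glue_mono h
  have h2 := glue_mono (by linarith : 1 - y ≤ 1 - x)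
  have n1 := expNegInvGlue.nonneg x
  have n2 := expNegInvGlue.nonneg (1 - y)
  nlinarith [expNegInvGlue.nonneg y, expNegInvGlue.nonneg (1 - x)]

lemma deriv_nonneg_of_mono {g : ℝ → ℝ} (hg : Monotone g) {c x : ℝ} (h : HasDerivAt g c x) :
    0 ≤ c := by
  have := (hasDerivAt_iff_tendsto_slope.1 h).mono_left
    (nhdsWithin_mono x (by intro y hy; exact ne_of_gt hy : Set.Ioi x ⊆ {x}ᶜ))
  refine ge_of_tendsto this ?_
  filter_upwards [self_mem_nhdsWithin] with y hy
  have hxy : x < y := Set.mem_Ioi.1 hy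
  have : g x ≤ g y := hg hxy.le
  rw [slope_def_field]
  exact div_nonneg (by linarith) (by linarith)


local instance euclidPO {d : ℕ} : PartialOrder (EuclideanSpace ℝ (Fin d)) :=
  PartialOrder.lift (fun x : EuclideanSpace ℝ (Fin d) => x.ofLp) (WithLp.ofLp_injective 2)

lemma abs_coord_le_norm {d : ℕ} (y : EuclideanSpace ℝ (Fin d)) (i : Fin d) : |y i| ≤ ‖y‖ := by
  rw [EuclideanSpace.norm_eq, ← Real.sqrt_sq_eq_abs]
  apply Real.sqrt_le_sqrt
  have := Finset.single_le_sum (f := fun j => ‖y j‖ ^ 2) (fun j _ => by positivity)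
    (Finset.mem_univ i)
  simpa [sq_abs] using this

lemma div_int_zero {n : ℕ} (V : EuclideanSpace ℝ (Fin (n+1)) → EuclideanSpace ℝ (Fin (n+1)))
    (hV : ContDiff ℝ 1 V) (hsupp : HasCompactSupport V) :
    ∫ x, ∑ i, fderiv ℝ V x (EuclideanSpace.single i 1) i = 0 := by
  obtain ⟨R, hR0, hR⟩ := hsupp.exists_pos_le_norm
  set eL : EuclideanSpace ℝ (Fin (n+1)) ≃L[ℝ] (Fin (n+1) → ℝ) := EuclideanSpace.equiv (Fin (n+1)) ℝ
  set a : EuclideanSpace ℝ (Fin (n+1)) := eL.symm (fun _ => -R)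
  set b : EuclideanSpace ℝ (Fin (n+1)) := eL.symm (fun _ => R)
  have hab : a ≤ b := by intro i; show -R ≤ R; linarith
  have hDFc : Continuous (fun x => ∑ i, fderiv ℝ V x (EuclideanSpace.single i 1) i) := by
    apply continuous_finset_sum
    intro i _
    exact (continuous_apply i).comp (Continuous.comp (PiLp.continuous_ofLp 2 _)
      ((ContinuousLinearMap.apply ℝ (EuclideanSpace ℝ (Fin (n+1))) (EuclideanSpace.single i 1)).continuous.comp
        (hV.continuous_fderiv one_ne_zero)))
  have hDFsupp : HasCompactSupport (fun x => ∑ i, fderiv ℝ V x (EuclideanSpace.single i 1) i) := by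
    have h1 := hsupp.fderiv (𝕜 := ℝ)
    exact h1.comp_left
      (g := fun L : EuclideanSpace ℝ (Fin (n+1)) →L[ℝ] EuclideanSpace ℝ (Fin (n+1)) =>
        ∑ i, L (EuclideanSpace.single i 1) i) (by simp)
  have key := integral_divergence_of_hasFDerivAt_off_countable_of_equiv eL
    (fun _ _ => Iff.rfl) (PiLp.volume_preserving_ofLp (Fin (n+1)))
    (fun i x => EuclideanSpace.proj i (V x))
    (fun i x => (EuclideanSpace.proj i).comp (fderiv ℝ V x)) ∅ Set.countable_empty a b hab
    (fun i => ((EuclideanSpace.proj i).continuous.comp (hV.continuous)).continuousOn)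
    (fun x _ i => by exact (EuclideanSpace.proj i).hasFDerivAt.comp x (hV.differentiable one_ne_zero x).hasFDerivAt)
    (fun x => ∑ i, fderiv ℝ V x (EuclideanSpace.single i 1) i)
    (fun x => by rfl)
    ((hDFc.integrable_of_hasCompactSupport hDFsupp).integrableOn)
  have hfaces : ∀ (i : Fin (n+1)) (c : ℝ), |c| = R →
      ∀ x : Fin n → ℝ, V ((eL.symm) (i.insertNth c x)) = 0 := by
    intro i c hc x
    apply hR
    have h1 : |((eL.symm) (i.insertNth c x) : EuclideanSpace ℝ (Fin (n+1))) i| ≤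
        ‖(eL.symm) (i.insertNth c x)‖ := abs_coord_le_norm _ i
    have h2 : ((eL.symm) (i.insertNth c x) : EuclideanSpace ℝ (Fin (n+1))) i = c := by
      exact Fin.insertNth_apply_same (α := fun _ => ℝ) i c x
    rw [h2, hc] at h1
    exact h1
  have hLHS : ∫ x in Set.Icc a b, (∑ i, fderiv ℝ V x (EuclideanSpace.single i 1) i) =
      ∫ x, ∑ i, fderiv ℝ V x (EuclideanSpace.single i 1) i := by
    apply setIntegral_eq_integral_of_forall_compl_eq_zero
    intro x hx
    have hnorm : R < ‖x‖ := by
      rw [Set.mem_Icc] at hx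
      push_neg at hx
      by_cases hax : a ≤ x
      · obtain ⟨i, hi⟩ : ∃ i, ¬ x i ≤ R := by
          by_contra hcon
          push_neg at hcon
          exact hx hax (fun i => hcon i)
        push_neg at hi
        calc R < x i := hi
        _ ≤ |x i| := le_abs_self _
        _ ≤ ‖x‖ := abs_coord_le_norm x i
      · obtain ⟨i, hi⟩ : ∃ i, ¬ (-R) ≤ x i := by
          by_contra hcon
          push_neg at hcon
          exact hax (fun i => hcon i)
        push_neg at hi
        calc R < -(x i) := lt_neg.mp hi
        _ ≤ |x i| := neg_le_abs _
        _ ≤ ‖x‖ := abs_coord_le_norm x i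
    have hev : V =ᶠ[nhds x] (fun _ => 0) := by
      have hopen : IsOpen {y : EuclideanSpace ℝ (Fin (n+1)) | R < ‖y‖} :=
        isOpen_lt continuous_const continuous_norm
      filter_upwards [hopen.mem_nhds hnorm] with y hy
      exact hR y (le_of_lt hy)
    have : fderiv ℝ V x = 0 := by
      rw [hev.fderiv_eq]
      exact fderiv_const_apply 0
    simp [this]
  rw [hLHS] at key
  rw [key]
  apply Finset.sum_eq_zero
  intro i _
  have e1 : eL b i = R := by show b i = R; simp [b]; rfl
  have e2 : eL a i = -R := by show a i = -R; simp [a]; rfl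
  rw [e1, e2]
  have z1 : ∀ x ∈ Set.Icc (eL a ∘ i.succAbove) (eL b ∘ i.succAbove),
      EuclideanSpace.proj i (V ((eL.symm) (i.insertNth R x))) = 0 := by
    intro x _
    rw [hfaces i R (abs_of_pos hR0) x]
    simp
  have z2 : ∀ x ∈ Set.Icc (eL a ∘ i.succAbove) (eL b ∘ i.succAbove),
      EuclideanSpace.proj i (V ((eL.symm) (i.insertNth (-R) x))) = 0 := by
    intro x _
    rw [hfaces i (-R) (by rw [abs_neg]; exact abs_of_pos hR0) x]
    simp
  rw [setIntegral_congr_fun measurableSet_Icc z1, setIntegral_congr_fun measurableSet_Icc z2]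
  simp




lemma norm_sq_eq_sum {d : ℕ} (y : EuclideanSpace ℝ (Fin d)) : ‖y‖ ^ 2 = ∑ i, (y i) ^ 2 := by
  rw [EuclideanSpace.norm_eq, Real.sq_sqrt (by positivity)]
  simp [sq_abs]

lemma coord_eq_inner {d : ℕ} (y : EuclideanSpace ℝ (Fin d)) (i : Fin d) :
    y i = inner ℝ (EuclideanSpace.single i (1:ℝ)) y := by
  rw [EuclideanSpace.inner_single_left]
  simp

lemma div_V_eq {d : ℕ} (f : EuclideanSpace ℝ (Fin d) → ℝ) (hf : ContDiff ℝ 2 f)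
    (G G' : ℝ → ℝ) (hG : ∀ s, HasDerivAt G (G' s) s) (x : EuclideanSpace ℝ (Fin d)) :
    ∑ i, fderiv ℝ (fun y => G (f y) • ∇ f y) x (EuclideanSpace.single i 1) i
      = G' (f x) * ‖∇ f x‖ ^ 2 + G (f x) * lap f x := by
  have hfd : DifferentiableAt ℝ f x := (hf.differentiable two_ne_zero).differentiableAt
  have hfd' : HasFDerivAt f (InnerProductSpace.toDual ℝ (EuclideanSpace ℝ (Fin d)) (∇ f x)) x :=
    hasGradientAt_iff_hasFDerivAt.mp hfd.hasGradientAt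
  have hD2 : HasFDerivAt (fderiv ℝ f) (fderiv ℝ (fderiv ℝ f) x) x :=
    (((hf.fderiv_right (by norm_num)).differentiable one_ne_zero) x).hasFDerivAt
  set LIE : StrongDual ℝ (EuclideanSpace ℝ (Fin d)) →L[ℝ] (EuclideanSpace ℝ (Fin d)) :=
    ((InnerProductSpace.toDual ℝ (EuclideanSpace ℝ (Fin d))).symm.toContinuousLinearEquiv :
      StrongDual ℝ (EuclideanSpace ℝ (Fin d)) ≃L[ℝ] (EuclideanSpace ℝ (Fin d))).toContinuousLinearMap
  have hgradD : HasFDerivAt (∇ f) (LIE.comp (fderiv ℝ (fderiv ℝ f) x)) x := by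
    exact LIE.hasFDerivAt.comp x hD2
  have hc : HasFDerivAt (fun y => G (f y))
      ((G' (f x)) • (InnerProductSpace.toDual ℝ (EuclideanSpace ℝ (Fin d)) (∇ f x))) x :=
    (hG (f x)).comp_hasFDerivAt x hfd'
  have hV := hc.smul hgradD
  rw [show (fun y => G (f y) • ∇ f y) = ((fun y => G (f y)) • ∇ f) from rfl, hV.fderiv]
  have hterm : ∀ i : Fin d,
      (G (f x) • (LIE.comp (fderiv ℝ (fderiv ℝ f) x)) +
        ((G' (f x)) • (InnerProductSpace.toDual ℝ (EuclideanSpace ℝ (Fin d)) (∇ f x))).smulRight (∇ f x))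
        (EuclideanSpace.single i 1) i
      = G (f x) * (fderiv ℝ (fderiv ℝ f) x (EuclideanSpace.single i 1) (EuclideanSpace.single i 1))
        + G' (f x) * ((∇ f x) i)^2 := by
    intro i
    rw [ContinuousLinearMap.add_apply]
    have e1 : (G (f x) • (LIE.comp (fderiv ℝ (fderiv ℝ f) x)))
        (EuclideanSpace.single i 1) i
        = G (f x) * (fderiv ℝ (fderiv ℝ f) x (EuclideanSpace.single i 1)
            (EuclideanSpace.single i 1)) := by
      rw [ContinuousLinearMap.smul_apply, ContinuousLinearMap.comp_apply]
      show (G (f x) • (LIE (fderiv ℝ (fderiv ℝ f) x (EuclideanSpace.single i 1)))) i = _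
      rw [PiLp.smul_apply, smul_eq_mul]
      congr 1
      rw [coord_eq_inner (LIE ((fderiv ℝ (fderiv ℝ f) x) (EuclideanSpace.single i 1))) i,
        real_inner_comm]
      exact InnerProductSpace.toDual_symm_apply
    have e2 : (((G' (f x)) • (InnerProductSpace.toDual ℝ (EuclideanSpace ℝ (Fin d)) (∇ f x))).smulRight (∇ f x))
        (EuclideanSpace.single i 1) i = G' (f x) * ((∇ f x) i)^2 := by
      rw [ContinuousLinearMap.smulRight_apply, ContinuousLinearMap.smul_apply]
      show ((G' (f x) * (InnerProductSpace.toDual ℝ (EuclideanSpace ℝ (Fin d)) (∇ f x)) (EuclideanSpace.single i 1)) • ∇ f x) i = _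
      rw [PiLp.smul_apply, smul_eq_mul, InnerProductSpace.toDual_apply_apply,
        EuclideanSpace.inner_single_right]
      rw [starRingEnd_apply, star_trivial]
      ring
    rw [PiLp.add_apply, e1, e2]
  rw [Finset.sum_congr rfl (fun i _ => hterm i), Finset.sum_add_distrib, ← Finset.mul_sum,
    ← Finset.mul_sum]
  rw [norm_sq_eq_sum, lap]
  have : ∀ i : Fin d, iteratedFDeriv ℝ 2 f x ![EuclideanSpace.single i 1, EuclideanSpace.single i 1]
      = fderiv ℝ (fderiv ℝ f) x (EuclideanSpace.single i 1) (EuclideanSpace.single i 1) := by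
    intro i
    rw [iteratedFDeriv_two_apply]
    rfl
  rw [Finset.sum_congr rfl (fun i _ => this i)]
  ring

lemma key_ineq {m : ℕ} (f : EuclideanSpace ℝ (Fin (m+1)) → ℝ)
    (hf : ContDiff ℝ 2 f) (hf0 : ∀ x, 0 ≤ f x)
    (hproper : ∀ K : Set ℝ, IsCompact K → IsCompact (f ⁻¹' K))
    (α β a : ℝ) (hα : 0 < α)
    (h1 : ∀ x, lap f x - α * ‖∇ f x‖ ^ 2 + β * f x ≤ a) (n : ℕ) :
    ∫ x, (1 - Real.smoothTransition (f x - n)) * Real.exp (-α * f x) * (β * f x - a) ≤ 0 := by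
  set χ : ℝ → ℝ := fun s => 1 - Real.smoothTransition (s - n) with hχdef
  set χd : ℝ → ℝ := fun s => -(deriv Real.smoothTransition (s - n)) with hχddef
  set G : ℝ → ℝ := fun s => -α * (χ s * Real.exp (-α * s)) with hGdef
  set Gd : ℝ → ℝ := fun s =>
    -α * (χd s * Real.exp (-α * s) + χ s * (Real.exp (-α * s) * -α)) with hGddef
  have hstdiff : Differentiable ℝ Real.smoothTransition :=
    (Real.smoothTransition.contDiff (n := 1)).differentiable (by simp)
  have hχder : ∀ s, HasDerivAt χ (χd s) s := by
    intro s
    have h0 : HasDerivAt (fun s : ℝ => s - n) 1 s := (hasDerivAt_id s).sub_const _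
    have h1 : HasDerivAt Real.smoothTransition (deriv Real.smoothTransition (s - n)) (s - n) :=
      (hstdiff (s - n)).hasDerivAt
    have h2 := (h1.comp s h0)
    have h3 := (hasDerivAt_const s (1:ℝ)).sub h2
    exact h3.congr_deriv (by simp [hχddef])
  have hexpder : ∀ s : ℝ, HasDerivAt (fun s => Real.exp (-α * s)) (Real.exp (-α * s) * -α) s := by
    intro s
    have h0 : HasDerivAt (fun s : ℝ => -α * s) (-α) s := by
      simpa using (hasDerivAt_id s).const_mul (-α)
    simpa using h0.exp
  have hGder : ∀ s, HasDerivAt G (Gd s) s := by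
    intro s
    exact (((hχder s).mul (hexpder s))).const_mul (-α)
  have hχd_nonpos : ∀ s, χd s ≤ 0 := by
    intro s
    have := deriv_nonneg_of_mono st_mono (hstdiff (s - n)).hasDerivAt
    simp only [hχddef]
    linarith
  have hχ_nonneg : ∀ s, 0 ≤ χ s := fun s => by
    simp only [hχdef]; linarith [Real.smoothTransition.le_one (s - n)]
  have hχ_zero : ∀ s : ℝ, (n:ℝ) + 1 ≤ s → χ s = 0 := fun s hs => by
    simp only [hχdef, Real.smoothTransition.one_of_one_le (by linarith : (1:ℝ) ≤ s - n)]
    ring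
  -- C¹ and compact support of V
  have hχC1 : ContDiff ℝ 1 χ := by
    apply ContDiff.sub contDiff_const
    exact Real.smoothTransition.contDiff.comp (contDiff_id.sub contDiff_const)
  have hGC1 : ContDiff ℝ 1 G := by
    apply ContDiff.mul contDiff_const
    exact hχC1.mul ((contDiff_const.mul contDiff_id).exp)
  have hgradC1 : ContDiff ℝ 1 (∇ f) := by
    have : (∇ f) = fun y =>
        (InnerProductSpace.toDual ℝ (EuclideanSpace ℝ (Fin (m+1)))).symm (fderiv ℝ f y) := rfl
    rw [this]
    exact ((InnerProductSpace.toDual ℝ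
      (EuclideanSpace ℝ (Fin (m+1)))).symm.toContinuousLinearEquiv.contDiff).comp
      (hf.fderiv_right (by norm_num))
  have hVC1 : ContDiff ℝ 1 (fun y => G (f y) • ∇ f y) :=
    (hGC1.comp (hf.of_le one_le_two)).smul hgradC1
  have hVsupp : HasCompactSupport (fun y => G (f y) • ∇ f y) := by
    apply HasCompactSupport.intro (hproper (Set.Icc 0 (n+1)) isCompact_Icc)
    intro x hx
    have : ¬ (f x ≤ n + 1) := by
      intro hcon
      exact hx ⟨hf0 x, hcon⟩
    push_neg at this
    have hz : G (f x) = 0 := by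
      rw [hGdef]
      simp only []
      rw [hχ_zero (f x) this.le]
      ring
    rw [hz, zero_smul]
  have hdiv := div_int_zero _ hVC1 hVsupp
  have hpt := div_V_eq f hf G Gd hGder
  -- pointwise inequality
  have hineq : ∀ x, α * ((1 - Real.smoothTransition (f x - n)) * Real.exp (-α * f x)
      * (β * f x - a)) ≤ ∑ i, fderiv ℝ (fun y => G (f y) • ∇ f y) x (EuclideanSpace.single i 1) i := by
    intro x
    rw [hpt x]
    have hc : (0:ℝ) ≤ χ (f x) := hχ_nonneg _
    have hcd : χd (f x) ≤ 0 := hχd_nonpos _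
    have he : (0:ℝ) < Real.exp (-α * f x) := Real.exp_pos _
    have hg2 : (0:ℝ) ≤ ‖∇ f x‖ ^ 2 := by positivity
    have hkey : β * f x - a ≤ α * ‖∇ f x‖ ^ 2 - lap f x := by linarith [h1 x]
    have hchi : (1 - Real.smoothTransition (f x - n)) = χ (f x) := rfl
    rw [hchi, hGdef, hGddef]
    simp only []
    nlinarith [mul_le_mul_of_nonneg_left hkey hc, mul_nonneg (neg_nonneg.2 hcd) hg2,
      mul_pos he (mul_pos hα hα)]
  -- integrability
  have hcont : Continuous (fun x => (1 - Real.smoothTransition (f x - n))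
      * Real.exp (-α * f x) * (β * f x - a)) := by
    have hfc : Continuous f := hf.continuous
    exact ((continuous_const.sub (Real.smoothTransition.continuous.comp
      (hfc.sub continuous_const))).mul ((continuous_const.mul hfc).rexp)).mul
      ((continuous_const.mul hfc).sub continuous_const)
  have hsupp1 : HasCompactSupport (fun x => (1 - Real.smoothTransition (f x - n))
      * Real.exp (-α * f x) * (β * f x - a)) := by
    apply HasCompactSupport.intro (hproper (Set.Icc 0 (n+1)) isCompact_Icc)
    intro x hx
    have : ¬ (f x ≤ n + 1) := fun hcon => hx ⟨hf0 x, hcon⟩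
    push_neg at this
    have h0 : (1 - Real.smoothTransition (f x - n)) = 0 := hχ_zero (f x) this.le
    rw [h0]; ring
  have hInt1 := hcont.integrable_of_hasCompactSupport (μ := volume) hsupp1
  have hDFc : Continuous (fun x => ∑ i,
      fderiv ℝ (fun y => G (f y) • ∇ f y) x (EuclideanSpace.single i 1) i) := by
    apply continuous_finset_sum
    intro i _
    exact (continuous_apply i).comp (Continuous.comp (PiLp.continuous_ofLp 2 _)
      ((ContinuousLinearMap.apply ℝ (EuclideanSpace ℝ (Fin (m+1))) (EuclideanSpace.single i 1)).continuous.comp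
        (hVC1.continuous_fderiv one_ne_zero)))
  have hDFsupp : HasCompactSupport (fun x => ∑ i,
      fderiv ℝ (fun y => G (f y) • ∇ f y) x (EuclideanSpace.single i 1) i) := by
    have h1' := hVsupp.fderiv (𝕜 := ℝ)
    exact h1'.comp_left
      (g := fun L : EuclideanSpace ℝ (Fin (m+1)) →L[ℝ] EuclideanSpace ℝ (Fin (m+1)) =>
        ∑ i, L (EuclideanSpace.single i 1) i) (by simp)
  have hInt2 := hDFc.integrable_of_hasCompactSupport (μ := volume) hDFsupp
  have hmono := integral_mono (hInt1.const_mul α) hInt2 hineq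
  rw [integral_const_mul, hdiv] at hmono
  rw [show (0:ℝ) = α * 0 by ring] at hmono
  exact le_of_mul_le_mul_left hmono hα

theorem integral_exp_neg_lt_top {d : ℕ} (f : EuclideanSpace ℝ (Fin d) → ℝ)
    (hf : ContDiff ℝ 2 f) (hf0 : ∀ x, 0 ≤ f x)
    (hproper : ∀ K : Set ℝ, IsCompact K → IsCompact (f ⁻¹' K))
    (α β a : ℝ) (hα : 0 < α) (hβ : 0 < β)
    (h1 : ∀ x, lap f x - α * ‖∇ f x‖ ^ 2 + β * f x ≤ a)
    (h2 : ∀ x, lap f x ≤ a) :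
    (∫⁻ x : EuclideanSpace ℝ (Fin d), ENNReal.ofReal (Real.exp (-α * f x))) < ⊤ := by
  have hfc : Continuous f := hf.continuous
  have hu1 : ∀ x, ENNReal.ofReal (Real.exp (-α * f x)) ≤ 1 := by
    intro x
    rw [show (1:ENNReal) = ENNReal.ofReal 1 by simp]
    apply ENNReal.ofReal_le_ofReal
    rw [show (1:ℝ) = Real.exp 0 by simp]
    apply Real.exp_le_exp.2
    have := hf0 x
    nlinarith
  obtain _ | m := d
  · calc (∫⁻ x : EuclideanSpace ℝ (Fin 0), ENNReal.ofReal (Real.exp (-α * f x)))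
        ≤ ∫⁻ _x : EuclideanSpace ℝ (Fin 0), 1 := lintegral_mono hu1
      _ = volume (Set.univ : Set (EuclideanSpace ℝ (Fin 0))) := lintegral_one
      _ < ⊤ := by rw [volume_euclideanSpace_eq_dirac]; simp
  · -- positive dimension
    set T : ℝ := max ((a+1)/β) 0 with hT
    set S : Set (EuclideanSpace ℝ (Fin (m+1))) := f ⁻¹' (Set.Icc 0 T) with hS
    have hScpt : IsCompact S := hproper _ isCompact_Icc
    have hSclosed : IsClosed S := IsClosed.preimage hfc isClosed_Icc
    have hSmeas : MeasurableSet S := hSclosed.measurableSet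
    have hSfin : volume S < ⊤ := hScpt.measure_lt_top
    have hSc : ∀ x, x ∈ Sᶜ → 1 ≤ β * f x - a := by
      intro x hx
      have hxT : T < f x := by
        by_contra hcon
        push_neg at hcon
        exact hx ⟨hf0 x, hcon⟩
      have hT1 : (a+1)/β ≤ T := le_max_left _ _
      have := (div_le_iff₀ hβ).mp hT1
      nlinarith
    -- per-cutoff bound
    have main : ∀ n : ℕ, ∫ x in (Sᶜ ∩ f ⁻¹' (Set.Iic (n:ℝ))), Real.exp (-α * f x)
        ≤ (β * T + |a|) * (volume S).toReal := by
      intro n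
      set g : EuclideanSpace ℝ (Fin (m+1)) → ℝ :=
        fun x => (1 - Real.smoothTransition (f x - n)) * Real.exp (-α * f x) * (β * f x - a)
        with hg
      have hgcont : Continuous g := by
        exact ((continuous_const.sub (Real.smoothTransition.continuous.comp
          (hfc.sub continuous_const))).mul ((continuous_const.mul hfc).rexp)).mul
          ((continuous_const.mul hfc).sub continuous_const)
      have hgsupp : HasCompactSupport g := by
        apply HasCompactSupport.intro (hproper (Set.Icc 0 (n+1)) isCompact_Icc)
        intro x hx
        have hgt : ¬ (f x ≤ n + 1) := fun hcon => hx ⟨hf0 x, hcon⟩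
        push_neg at hgt
        have h0 : Real.smoothTransition (f x - n) = 1 :=
          Real.smoothTransition.one_of_one_le (by linarith)
        rw [hg]
        simp only [h0]
        ring
      have hgInt : Integrable g volume := hgcont.integrable_of_hasCompactSupport hgsupp
      have hkey : ∫ x, g x ≤ 0 := key_ineq f hf hf0 hproper α β a hα h1 n
      have hsplit := integral_add_compl hSmeas hgInt (μ := volume)
      have hbS : |∫ x in S, g x| ≤ (β * T + |a|) * (volume S).toReal := by
        rw [← Real.norm_eq_abs]
        apply norm_setIntegral_le_of_norm_le_const hSfin
        intro x hx
        obtain ⟨hx0, hxT⟩ := hx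
        have hst0 := Real.smoothTransition.nonneg (f x - n)
        have hst1 := Real.smoothTransition.le_one (f x - n)
        have hexp0 := Real.exp_pos (-α * f x)
        have hexp1 : Real.exp (-α * f x) ≤ 1 := by
          rw [show (1:ℝ) = Real.exp 0 by simp]
          apply Real.exp_le_exp.2
          nlinarith
        rw [Real.norm_eq_abs, hg]
        simp only []
        rw [abs_mul, abs_mul]
        have e1 : |1 - Real.smoothTransition (f x - n)| ≤ 1 := by rw [abs_le]; constructor <;> linarith
        have e2 : |Real.exp (-α * f x)| ≤ 1 := by rw [abs_of_pos hexp0]; exact hexp1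
        have e3 : |β * f x - a| ≤ β * T + |a| := by
          rw [abs_le]
          have hba := abs_nonneg a
          have := le_abs_self a
          have := neg_abs_le a
          constructor <;> nlinarith
        calc |1 - Real.smoothTransition (f x - n)| * |Real.exp (-α * f x)| * |β * f x - a|
            ≤ 1 * 1 * (β * T + |a|) := by
              apply mul_le_mul _ e3 (abs_nonneg _) (by norm_num)
              apply mul_le_mul e1 e2 (abs_nonneg _) (by linarith [abs_nonneg (1 - Real.smoothTransition (f x - n))])
          _ = β * T + |a| := by ring
      have hScInt : ∫ x in Sᶜ, g x ≤ (β * T + |a|) * (volume S).toReal := by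
        have : ∫ x in Sᶜ, g x = (∫ x, g x) - ∫ x in S, g x := eq_sub_of_add_eq' hsplit
        rw [this]
        have := abs_le.mp hbS
        linarith
      -- lower bound
      set A : Set (EuclideanSpace ℝ (Fin (m+1))) := Sᶜ ∩ f ⁻¹' (Set.Iic (n:ℝ)) with hA
      have hAmeas : MeasurableSet A :=
        hSmeas.compl.inter (hfc.measurable (measurableSet_Iic))
      have hAsub : A ⊆ Sᶜ := Set.inter_subset_left
      have hgnonneg : ∀ x ∈ Sᶜ, 0 ≤ g x := by
        intro x hx
        have h1' := hSc x hx
        have hst1 := Real.smoothTransition.le_one (f x - n)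
        have hexp0 := (Real.exp_pos (-α * f x)).le
        rw [hg]
        have : (0:ℝ) ≤ 1 - Real.smoothTransition (f x - n) := by linarith
        positivity
      have hmono1 : ∫ x in A, g x ≤ ∫ x in Sᶜ, g x := by
        apply setIntegral_mono_set hgInt.integrableOn
        · filter_upwards [ae_restrict_mem hSmeas.compl] with x hx
          exact hgnonneg x hx
        · exact HasSubset.Subset.eventuallyLE hAsub
      have hAKn : A ⊆ f ⁻¹' (Set.Icc 0 (n:ℝ)) := by
        intro x hx
        exact ⟨hf0 x, hx.2⟩
      have huIntA : IntegrableOn (fun x => Real.exp (-α * f x)) A := by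
        apply IntegrableOn.mono_set _ hAKn
        exact (((continuous_const.mul hfc).rexp).continuousOn).integrableOn_compact
          (hproper _ isCompact_Icc)
      have hgIntA : IntegrableOn g A := hgInt.integrableOn
      have hmono2 : ∫ x in A, Real.exp (-α * f x) ≤ ∫ x in A, g x := by
        apply setIntegral_mono_on huIntA hgIntA hAmeas
        intro x hx
        have hx1 : 1 ≤ β * f x - a := hSc x hx.1
        have hfn : f x ≤ n := hx.2
        have hst : Real.smoothTransition (f x - n) = 0 :=
          Real.smoothTransition.zero_of_nonpos (by linarith)
        rw [hg]
        simp only [hst, sub_zero, one_mul]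
        nlinarith [(Real.exp_pos (-α * f x)).le]
      linarith
    -- pass to lintegral
    set ν : Measure (EuclideanSpace ℝ (Fin (m+1))) :=
      volume.withDensity (fun x => ENNReal.ofReal (Real.exp (-α * f x))) with hν
    have hνapply : ∀ B : Set (EuclideanSpace ℝ (Fin (m+1))), MeasurableSet B →
        ν B = ∫⁻ x in B, ENNReal.ofReal (Real.exp (-α * f x)) :=
      fun B hB => withDensity_apply _ hB
    set A : ℕ → Set (EuclideanSpace ℝ (Fin (m+1))) :=
      fun n => Sᶜ ∩ f ⁻¹' (Set.Iic (n:ℝ)) with hAdef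
    have hAmeas : ∀ n, MeasurableSet (A n) :=
      fun n => hSmeas.compl.inter (hfc.measurable measurableSet_Iic)
    have hAbound : ∀ n, ν (A n) ≤ ENNReal.ofReal ((β * T + |a|) * (volume S).toReal) := by
      intro n
      rw [hνapply _ (hAmeas n)]
      have huIntA : IntegrableOn (fun x => Real.exp (-α * f x)) (A n) := by
        apply IntegrableOn.mono_set _ (fun x hx => (⟨hf0 x, hx.2⟩ : f x ∈ Set.Icc 0 (n:ℝ)))
        exact (((continuous_const.mul hfc).rexp).continuousOn).integrableOn_compact
          (hproper _ isCompact_Icc)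
      rw [← ofReal_integral_eq_lintegral_ofReal huIntA
        (Filter.Eventually.of_forall (fun x => (Real.exp_pos _).le))]
      exact ENNReal.ofReal_le_ofReal (main n)
    have hAmono : Monotone A := by
      intro i j hij x hx
      refine ⟨hx.1, ?_⟩
      have h2 : f x ≤ (i:ℝ) := hx.2
      exact le_trans h2 (Nat.cast_le.2 hij)
    have hAunion : Sᶜ ⊆ ⋃ n, A n := by
      intro x hx
      obtain ⟨n, hn⟩ := exists_nat_ge (f x)
      exact Set.mem_iUnion.2 ⟨n, hx, hn⟩
    have hνSc : ν Sᶜ ≤ ENNReal.ofReal ((β * T + |a|) * (volume S).toReal) := by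
      calc ν Sᶜ ≤ ν (⋃ n, A n) := measure_mono hAunion
        _ = ⨆ n, ν (A n) := Directed.measure_iUnion (hAmono.directed_le)
        _ ≤ _ := iSup_le hAbound
    have hνS : ν S ≤ volume S := by
      rw [hνapply _ hSmeas]
      calc ∫⁻ x in S, ENNReal.ofReal (Real.exp (-α * f x)) ≤ ∫⁻ _x in S, 1 :=
            lintegral_mono (fun x => hu1 x)
        _ = volume S := by rw [setLIntegral_one]
    have htotal : (∫⁻ x, ENNReal.ofReal (Real.exp (-α * f x))) = ν Set.univ := by
      rw [hνapply _ MeasurableSet.univ, Measure.restrict_univ]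
    rw [htotal]
    calc ν Set.univ = ν (S ∪ Sᶜ) := by rw [Set.union_compl_self]
      _ ≤ ν S + ν Sᶜ := measure_union_le _ _
      _ ≤ volume S + ENNReal.ofReal ((β * T + |a|) * (volume S).toReal) := add_le_add hνS hνSc
      _ < ⊤ := by
          apply ENNReal.add_lt_top.2
          exact ⟨hSfin, ENNReal.ofReal_lt_top⟩
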